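/- Let σ_1,…,σ_p > 0, n ≥ 1, x ∈ ℝ with x ≠ 0, and let m ∈ ℂ with Im(m) ≠ 0 satisfy x = −1/m + (1/n)Σ_{i=1}^p σ_i/(1 + m σ_i), where 1 + mσ_i ≠ 0 for all i. Then (1/n)·Σ_{i=1}^p σ_i²/|1 + m σ_i|² = 1/|m|². -/

import Mathlib

/-- Taking imaginary parts of the deformed Marchenko–Pastur self-consistent equation
`x = -1/m + (1/n) ∑ σᵢ/(1 + mσᵢ)` at a real spectral parameter `x` yields
`(1/n) ∑ σᵢ²/|1 + mσᵢ|² = 1/|m|²`. -/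
theorem statement10 (p n : ℕ) (hn : 1 ≤ n) (σ : Fin p → ℝ) (hσ : ∀ i, 0 < σ i)
    (x : ℝ) (hx : x ≠ 0) (m : ℂ) (hm : m.im ≠ 0)
    (hmi : ∀ i, (1 : ℂ) + m * (σ i : ℂ) ≠ 0)
    (h : (x : ℂ) = -1 / m + (1 / (n : ℂ)) * ∑ i, (σ i : ℂ) / (1 + m * (σ i : ℂ))) :
    (1 / (n : ℝ)) * ∑ i, (σ i) ^ 2 / ‖1 + m * (σ i : ℂ)‖ ^ 2
      = 1 / ‖m‖ ^ 2 := by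
  have hm0 : m ≠ 0 := fun h0 => hm (by simp [h0])
  have hn0 : (n : ℝ) ≠ 0 := Nat.cast_ne_zero.mpr (by omega)
  have hnsq : Complex.normSq m ≠ 0 := (Complex.normSq_pos.mpr hm0).ne'
  have hnsqi : ∀ i, Complex.normSq (1 + m * (σ i : ℂ)) ≠ 0 :=
    fun i => (Complex.normSq_pos.mpr (hmi i)).ne'
  have him := congrArg Complex.im h
  have h1 : ((-1 : ℂ) / m).im = m.im / Complex.normSq m := by
    rw [Complex.div_im]; simp [neg_div]
  have h2 : ∀ i, ((σ i : ℂ) / (1 + m * (σ i : ℂ))).im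
      = -((σ i) ^ 2 * m.im) / Complex.normSq (1 + m * (σ i : ℂ)) := by
    intro i
    rw [Complex.div_im]
    simp [Complex.add_im, Complex.mul_im]
    ring
  have h3 : ((1 / (n : ℂ)) * ∑ i, (σ i : ℂ) / (1 + m * (σ i : ℂ))).im
      = (1 / (n : ℝ)) * ∑ i, -((σ i) ^ 2 * m.im) / Complex.normSq (1 + m * (σ i : ℂ)) := by
    rw [Complex.mul_im, Complex.im_sum]
    simp [h2, Complex.div_re, Complex.div_im]
  rw [Complex.ofReal_im, Complex.add_im, h1, h3] at him
  have key : m.im * ((1 / (n : ℝ)) * ∑ i, (σ i) ^ 2 / Complex.normSq (1 + m * (σ i : ℂ)))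
      = m.im * (1 / Complex.normSq m) := by
    have : (1 / (n : ℝ)) * ∑ i, -((σ i) ^ 2 * m.im) / Complex.normSq (1 + m * (σ i : ℂ))
        = -(m.im * ((1 / (n : ℝ)) * ∑ i, (σ i) ^ 2 / Complex.normSq (1 + m * (σ i : ℂ)))) := by
      rw [Finset.mul_sum, Finset.mul_sum, ← neg_mul, Finset.mul_sum]
      congr 1; ext i; field_simp
    rw [this] at him
    field_simp at him ⊢
    have h6 : m.im * ((n : ℝ) - Complex.normSq m * ∑ x, σ x ^ 2 / Complex.normSq (1 + m * ↑(σ x))) = 0 := by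
      linear_combination -him
    have h7 := (mul_eq_zero.mp h6).resolve_left hm
    linear_combination -h7
  simp only [Complex.sq_norm]
  exact mul_left_cancel₀ hm key
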